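/- With σ₁, σ₂ nonzero real constants and ∂_ζ̄ = ∂/∂x₂ + i∂/∂x₁, the function Z⁽¹⁾(1)(x₁,x₂) = (1/σ₂)e^{−σ₁x₁} sinh(σ₂x₂) + (i/σ₁)e^{−σ₂x₂} sinh(σ₁x₁) is a solution of the Vekua equation ∂_ζ̄ W − (σ₂ − iσ₁)·conj(W) = 0, vanishes at the origin, and satisfies Z⁽¹⁾(1)(x₁,x₂)/(x₂ + ix₁) → 1 as (x₁,x₂) → (0,0). -/

import Mathlib

/-- `∂_ζ̄ = ∂/∂x₂ + i ∂/∂x₁`, for `ζ = x₂ + i x₁`. -/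
noncomputable def dzetabar (F : ℝ → ℝ → ℂ) (x₁ x₂ : ℝ) : ℂ :=
  deriv (fun t => F x₁ t) x₂ + Complex.I * deriv (fun t => F t x₂) x₁

/-- The first formal power `Z⁽¹⁾(1)` solves the Vekua equation
`∂_ζ̄ W − (σ₂ − iσ₁) conj W = 0`, vanishes at the origin, and satisfies
`Z⁽¹⁾(1)(x₁,x₂)/(x₂ + ix₁) → 1` as `(x₁,x₂) → (0,0)`. -/
theorem formal_power_degree_one_coefficient_one
    (σ₁ σ₂ : ℝ) (hσ₁ : σ₁ ≠ 0) (hσ₂ : σ₂ ≠ 0)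
    (Z : ℝ → ℝ → ℂ)
    (hZ : Z = fun x₁ x₂ =>
      ((1 / σ₂ * Real.exp (-σ₁ * x₁) * Real.sinh (σ₂ * x₂) : ℝ) : ℂ)
        + Complex.I * ((1 / σ₁ * Real.exp (-σ₂ * x₂) * Real.sinh (σ₁ * x₁) : ℝ) : ℂ)) :
    (∀ x₁ x₂, dzetabar Z x₁ x₂
        - ((σ₂ : ℂ) - Complex.I * (σ₁ : ℂ)) * (starRingEnd ℂ) (Z x₁ x₂) = 0) ∧
    Z 0 0 = 0 ∧
    Filter.Tendsto (fun q : ℝ × ℝ => Z q.1 q.2 / ((q.2 : ℂ) + Complex.I * (q.1 : ℂ)))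
      (nhdsWithin ((0, 0) : ℝ × ℝ) {((0, 0) : ℝ × ℝ)}ᶜ) (nhds 1) := by
  subst hZ
  have hσ₁' : (σ₁ : ℂ) ≠ 0 := by exact_mod_cast hσ₁
  have hσ₂' : (σ₂ : ℂ) ≠ 0 := by exact_mod_cast hσ₂
  refine ⟨?_, by simp, ?_⟩
  · intro x₁ x₂
    -- derivative in x₂
    have e1 : HasDerivAt (fun t : ℝ => Real.sinh (σ₂ * t)) (σ₂ * Real.cosh (σ₂ * x₂)) x₂ := by
      simpa [Function.comp_def, mul_comm] using (Real.hasDerivAt_sinh (σ₂ * x₂)).comp x₂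
        ((hasDerivAt_id x₂).const_mul σ₂)
    have e2 : HasDerivAt (fun t : ℝ => Real.exp (-σ₂ * t)) (-σ₂ * Real.exp (-σ₂ * x₂)) x₂ := by
      simpa [Function.comp_def, mul_comm] using (Real.hasDerivAt_exp (-σ₂ * x₂)).comp x₂
        ((hasDerivAt_id x₂).const_mul (-σ₂))
    have A1 : HasDerivAt (fun t : ℝ => 1 / σ₂ * Real.exp (-σ₁ * x₁) * Real.sinh (σ₂ * t))
        (1 / σ₂ * Real.exp (-σ₁ * x₁) * (σ₂ * Real.cosh (σ₂ * x₂))) x₂ :=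
      e1.const_mul _
    have B1 : HasDerivAt (fun t : ℝ => 1 / σ₁ * Real.exp (-σ₂ * t) * Real.sinh (σ₁ * x₁))
        ((1 / σ₁ * (-σ₂ * Real.exp (-σ₂ * x₂))) * Real.sinh (σ₁ * x₁)) x₂ :=
      (e2.const_mul (1 / σ₁)).mul_const _
    have h2 : HasDerivAt (fun t : ℝ =>
        ((1 / σ₂ * Real.exp (-σ₁ * x₁) * Real.sinh (σ₂ * t) : ℝ) : ℂ)
          + Complex.I * ((1 / σ₁ * Real.exp (-σ₂ * t) * Real.sinh (σ₁ * x₁) : ℝ) : ℂ))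
        (((1 / σ₂ * Real.exp (-σ₁ * x₁) * (σ₂ * Real.cosh (σ₂ * x₂)) : ℝ) : ℂ)
          + Complex.I * (((1 / σ₁ * (-σ₂ * Real.exp (-σ₂ * x₂))) * Real.sinh (σ₁ * x₁) : ℝ) : ℂ)) x₂ :=
      A1.ofReal_comp.add (B1.ofReal_comp.const_mul Complex.I)
    -- derivative in x₁
    have f1 : HasDerivAt (fun t : ℝ => Real.exp (-σ₁ * t)) (-σ₁ * Real.exp (-σ₁ * x₁)) x₁ := by
      simpa [Function.comp_def, mul_comm] using (Real.hasDerivAt_exp (-σ₁ * x₁)).comp x₁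
        ((hasDerivAt_id x₁).const_mul (-σ₁))
    have f2 : HasDerivAt (fun t : ℝ => Real.sinh (σ₁ * t)) (σ₁ * Real.cosh (σ₁ * x₁)) x₁ := by
      simpa [Function.comp_def, mul_comm] using (Real.hasDerivAt_sinh (σ₁ * x₁)).comp x₁
        ((hasDerivAt_id x₁).const_mul σ₁)
    have A2 : HasDerivAt (fun t : ℝ => 1 / σ₂ * Real.exp (-σ₁ * t) * Real.sinh (σ₂ * x₂))
        ((1 / σ₂ * (-σ₁ * Real.exp (-σ₁ * x₁))) * Real.sinh (σ₂ * x₂)) x₁ :=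
      (f1.const_mul (1 / σ₂)).mul_const _
    have B2 : HasDerivAt (fun t : ℝ => 1 / σ₁ * Real.exp (-σ₂ * x₂) * Real.sinh (σ₁ * t))
        (1 / σ₁ * Real.exp (-σ₂ * x₂) * (σ₁ * Real.cosh (σ₁ * x₁))) x₁ :=
      f2.const_mul _
    have h1 : HasDerivAt (fun t : ℝ =>
        ((1 / σ₂ * Real.exp (-σ₁ * t) * Real.sinh (σ₂ * x₂) : ℝ) : ℂ)
          + Complex.I * ((1 / σ₁ * Real.exp (-σ₂ * x₂) * Real.sinh (σ₁ * t) : ℝ) : ℂ))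
        ((((1 / σ₂ * (-σ₁ * Real.exp (-σ₁ * x₁))) * Real.sinh (σ₂ * x₂) : ℝ) : ℂ)
          + Complex.I * ((1 / σ₁ * Real.exp (-σ₂ * x₂) * (σ₁ * Real.cosh (σ₁ * x₁)) : ℝ) : ℂ)) x₁ :=
      A2.ofReal_comp.add (B2.ofReal_comp.const_mul Complex.I)
    simp only [dzetabar]
    rw [h2.deriv, h1.deriv]
    simp only [map_add, map_mul, Complex.conj_ofReal, Complex.conj_I,
      Real.sinh_eq, Real.cosh_eq]
    push_cast
    field_simp
    ring_nf
    simp [Complex.I_sq]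
  · -- the limit
    set p₀ : ℝ × ℝ := (0, 0) with hp₀
    set ζ : ℝ × ℝ → ℂ := fun q => (q.2 : ℂ) + Complex.I * (q.1 : ℂ) with hζ
    set g : ℝ × ℝ → ℂ := fun q =>
      ((1 / σ₂ * Real.exp (-σ₁ * q.1) * Real.sinh (σ₂ * q.2) : ℝ) : ℂ)
        + Complex.I * ((1 / σ₁ * Real.exp (-σ₂ * q.2) * Real.sinh (σ₁ * q.1) : ℝ) : ℂ)
      with hg_def
    set Da : (ℝ × ℝ) →L[ℝ] ℝ :=
      (1 / σ₂ * Real.exp (-σ₁ * (0:ℝ))) •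
          (Real.cosh (σ₂ * (0:ℝ)) • (σ₂ • ContinuousLinearMap.snd ℝ ℝ ℝ))
        + Real.sinh (σ₂ * (0:ℝ)) •
          ((1 / σ₂ : ℝ) • (Real.exp (-σ₁ * (0:ℝ)) • ((-σ₁) • ContinuousLinearMap.fst ℝ ℝ ℝ)))
      with hDa
    set Db : (ℝ × ℝ) →L[ℝ] ℝ :=
      (1 / σ₁ * Real.exp (-σ₂ * (0:ℝ))) •
          (Real.cosh (σ₁ * (0:ℝ)) • (σ₁ • ContinuousLinearMap.fst ℝ ℝ ℝ))
        + Real.sinh (σ₁ * (0:ℝ)) •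
          ((1 / σ₁ : ℝ) • (Real.exp (-σ₂ * (0:ℝ)) • ((-σ₂) • ContinuousLinearMap.snd ℝ ℝ ℝ)))
      with hDb
    set D : (ℝ × ℝ) →L[ℝ] ℂ :=
      Complex.ofRealCLM.comp Da + Complex.I • Complex.ofRealCLM.comp Db with hD
    have hu2 : HasFDerivAt (fun q : ℝ × ℝ => Real.exp (-σ₁ * q.1))
        (Real.exp (-σ₁ * (0:ℝ)) • ((-σ₁) • ContinuousLinearMap.fst ℝ ℝ ℝ)) p₀ :=
      (Real.hasDerivAt_exp (-σ₁ * (0:ℝ))).comp_hasFDerivAt (f := fun q : ℝ × ℝ => -σ₁ * q.1) p₀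
        ((hasFDerivAt_fst (p := p₀) (𝕜 := ℝ)).const_mul (-σ₁))
    have hv2 : HasFDerivAt (fun q : ℝ × ℝ => Real.sinh (σ₂ * q.2))
        (Real.cosh (σ₂ * (0:ℝ)) • (σ₂ • ContinuousLinearMap.snd ℝ ℝ ℝ)) p₀ :=
      (Real.hasDerivAt_sinh (σ₂ * (0:ℝ))).comp_hasFDerivAt (f := fun q : ℝ × ℝ => σ₂ * q.2) p₀
        ((hasFDerivAt_snd (p := p₀) (𝕜 := ℝ)).const_mul σ₂)
    have ha : HasFDerivAt (fun q : ℝ × ℝ => 1 / σ₂ * Real.exp (-σ₁ * q.1) * Real.sinh (σ₂ * q.2))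
        Da p₀ := (hu2.const_mul (1 / σ₂)).mul hv2
    have hu1 : HasFDerivAt (fun q : ℝ × ℝ => Real.exp (-σ₂ * q.2))
        (Real.exp (-σ₂ * (0:ℝ)) • ((-σ₂) • ContinuousLinearMap.snd ℝ ℝ ℝ)) p₀ :=
      (Real.hasDerivAt_exp (-σ₂ * (0:ℝ))).comp_hasFDerivAt (f := fun q : ℝ × ℝ => -σ₂ * q.2) p₀
        ((hasFDerivAt_snd (p := p₀) (𝕜 := ℝ)).const_mul (-σ₂))
    have hv1 : HasFDerivAt (fun q : ℝ × ℝ => Real.sinh (σ₁ * q.1))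
        (Real.cosh (σ₁ * (0:ℝ)) • (σ₁ • ContinuousLinearMap.fst ℝ ℝ ℝ)) p₀ :=
      (Real.hasDerivAt_sinh (σ₁ * (0:ℝ))).comp_hasFDerivAt (f := fun q : ℝ × ℝ => σ₁ * q.1) p₀
        ((hasFDerivAt_fst (p := p₀) (𝕜 := ℝ)).const_mul σ₁)
    have hb : HasFDerivAt (fun q : ℝ × ℝ => 1 / σ₁ * Real.exp (-σ₂ * q.2) * Real.sinh (σ₁ * q.1))
        Db p₀ := (hu1.const_mul (1 / σ₁)).mul hv1
    have hA : HasFDerivAt (fun q : ℝ × ℝ =>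
        ((1 / σ₂ * Real.exp (-σ₁ * q.1) * Real.sinh (σ₂ * q.2) : ℝ) : ℂ))
        (Complex.ofRealCLM.comp Da) p₀ := Complex.ofRealCLM.hasFDerivAt.comp p₀ ha
    have hB : HasFDerivAt (fun q : ℝ × ℝ =>
        ((1 / σ₁ * Real.exp (-σ₂ * q.2) * Real.sinh (σ₁ * q.1) : ℝ) : ℂ))
        (Complex.ofRealCLM.comp Db) p₀ := Complex.ofRealCLM.hasFDerivAt.comp p₀ hb
    have hg : HasFDerivAt g D p₀ := hA.add (hB.const_mul Complex.I)
    have key := hg.isLittleO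
    have hLval : ∀ q : ℝ × ℝ, D q = ζ q := by
      intro q
      simp only [hD, hDa, hDb, ContinuousLinearMap.add_apply, ContinuousLinearMap.smul_apply,
        ContinuousLinearMap.comp_apply, ContinuousLinearMap.coe_fst', ContinuousLinearMap.coe_snd',
        hζ, smul_eq_mul, mul_zero, neg_zero, Real.exp_zero, Real.cosh_zero, Real.sinh_zero,
        Complex.ofRealCLM_apply, Complex.real_smul, Complex.ofReal_mul, Complex.ofReal_zero]
      push_cast
      field_simp
      ring
    have ho : (fun q : ℝ × ℝ => g q - ζ q) =o[nhds p₀] (fun q => q) := by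
      have hg0 : g p₀ = 0 := by simp [hg_def, hp₀]
      refine key.congr ?_ ?_
      · intro q
        rw [hg0, hp₀]
        simp only [Prod.mk_zero_zero, sub_zero]
        rw [hLval q]
      · intro q; rw [hp₀]; simp
    have hnorm : ∀ q : ℝ × ℝ, ‖q‖ ≤ ‖ζ q‖ := by
      intro q
      have h1 : |q.1| ≤ ‖ζ q‖ := by
        have he : (ζ q).im = q.1 := by simp [hζ]
        calc |q.1| = |(ζ q).im| := by rw [he]
        _ ≤ ‖ζ q‖ := Complex.abs_im_le_norm _
      have h2 : |q.2| ≤ ‖ζ q‖ := by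
        have he : (ζ q).re = q.2 := by simp [hζ]
        calc |q.2| = |(ζ q).re| := by rw [he]
        _ ≤ ‖ζ q‖ := Complex.abs_re_le_norm _
      rw [Prod.norm_def]
      simp only [Real.norm_eq_abs]
      exact max_le h1 h2
    have h0 : Filter.Tendsto (fun q : ℝ × ℝ => ‖g q - ζ q‖ / ‖q‖) (nhds p₀) (nhds 0) :=
      ho.norm_norm.tendsto_div_nhds_zero
    have hsub : Filter.Tendsto (fun q : ℝ × ℝ => g q / ζ q - 1)
        (nhdsWithin p₀ {p₀}ᶜ) (nhds 0) := by
      apply squeeze_zero_norm' (a := fun q : ℝ × ℝ => ‖g q - ζ q‖ / ‖q‖)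
      · filter_upwards [self_mem_nhdsWithin] with q hq
        have hqne : q ≠ p₀ := hq
        have hq0 : (0:ℝ) < ‖q‖ := by
          rw [norm_pos_iff]
          simpa [hp₀, Prod.mk_zero_zero] using hqne
        have hζq : ζ q ≠ 0 := by
          intro h
          have h3 := hnorm q
          rw [h, norm_zero] at h3
          linarith
        have heq : g q / ζ q - 1 = (g q - ζ q) / ζ q := by
          field_simp
        rw [heq, norm_div]
        exact div_le_div_of_nonneg_left (norm_nonneg _) hq0 (hnorm q)
      · exact h0.mono_left nhdsWithin_le_nhds
    have hfin := hsub.add_const 1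
    have hgoal : Filter.Tendsto (fun q : ℝ × ℝ => g q / ζ q)
        (nhdsWithin p₀ {p₀}ᶜ) (nhds 1) := by
      simpa using hfin
    exact hgoal
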